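/- Let E, A ∈ ℂ^{n×n}, B ∈ ℂ^{n×m}, C ∈ ℂ^{p×n}, D ∈ ℂ^{p×m}, and let P_l, P_r ∈ ℂ^{n×n} satisfy P_l² = P_l, P_r² = P_r, E P_r = P_l E, and A P_r = P_l A. Let V_f, W_f ∈ ℂ^{n×k} and V_∞, W_∞ ∈ ℂ^{n×k_∞}, and set V = [V_f, V_∞] ∈ ℂ^{n×(k+k_∞)} and W = [W_f, W_∞]. Assume the column span of V_∞ contains the range of I − P_r. Let σ ∈ ℂ and b ∈ ℂ^m be such that σE − A is invertible, (σE − A)^{-1} P_l B b lies in the column span of V_f, and the reduced matrix σ Wᵀ E V − Wᵀ A V is invertible. Then, with E_r = Wᵀ E V, A_r = Wᵀ A V, B_r = Wᵀ B, C_r = C V, and D_r = D, the right tangential interpolation condition G(σ) b = G_r(σ) b holds, where G(s) = C(sE − A)^{-1}B + D and G_r(s) = C_r(sE_r − A_r)^{-1}B_r + D_r. -/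

import Mathlib

open Matrix

/-- Interpolatory model reduction of DAEs (Theorem 3.1 of Gugercin–Stykel–Wyatt,
right tangential condition).  With `V = [V_f, V_∞]`, `W = [W_f, W_∞]`, where the
column span of `V_∞` contains the range of `I − P_r` and
`(σE − A)⁻¹ P_l B b` lies in the column span of `V_f`, the Petrov–Galerkin
reduced model satisfies `G(σ) b = G_r(σ) b`. -/
theorem dae_right_tangential_interpolation
    (n m p k kinf : ℕ)
    (E A : Matrix (Fin n) (Fin n) ℂ)
    (B : Matrix (Fin n) (Fin m) ℂ)
    (C : Matrix (Fin p) (Fin n) ℂ)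
    (D : Matrix (Fin p) (Fin m) ℂ)
    (Pl Pr : Matrix (Fin n) (Fin n) ℂ)
    (hPl : Pl * Pl = Pl) (hPr : Pr * Pr = Pr)
    (hEP : E * Pr = Pl * E) (hAP : A * Pr = Pl * A)
    (Vf Wf : Matrix (Fin n) (Fin k) ℂ)
    (Vinf Winf : Matrix (Fin n) (Fin kinf) ℂ)
    (V W : Matrix (Fin n) (Fin k ⊕ Fin kinf) ℂ)
    (hV : V = fromCols Vf Vinf)
    (hW : W = fromCols Wf Winf)
    (hVinf : ∀ x : Fin n → ℂ, ∃ y : Fin kinf → ℂ,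
      (1 - Pr).mulVec x = Vinf.mulVec y)
    (σ : ℂ) (b : Fin m → ℂ)
    (hfull : IsUnit (σ • E - A))
    (hspan : ∃ ζ : Fin k → ℂ,
      (σ • E - A)⁻¹.mulVec (Pl.mulVec (B.mulVec b)) = Vf.mulVec ζ)
    (hred : IsUnit (σ • (Wᵀ * E * V) - Wᵀ * A * V)) :
    (C * (σ • E - A)⁻¹ * B + D).mulVec b
      = (C * V * (σ • (Wᵀ * E * V) - Wᵀ * A * V)⁻¹ * (Wᵀ * B) + D).mulVec b := by

  set F := σ • E - A with hF
  have hdet : IsUnit F.det := (Matrix.isUnit_iff_isUnit_det _).mp hfull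
  have hFi : F⁻¹ * F = 1 := Matrix.nonsing_inv_mul _ hdet
  have hiF : F * F⁻¹ = 1 := Matrix.mul_nonsing_inv _ hdet
  have hcomm : F * Pr = Pl * F := by
    simp only [hF, Matrix.sub_mul, Matrix.mul_sub, Matrix.smul_mul, Matrix.mul_smul, hEP, hAP]
  have hswap : F⁻¹ * Pl = Pr * F⁻¹ := by
    calc F⁻¹ * Pl = F⁻¹ * (Pl * F) * F⁻¹ := by rw [mul_assoc, mul_assoc, hiF, mul_one]
    _ = F⁻¹ * (F * Pr) * F⁻¹ := by rw [hcomm]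
    _ = Pr * F⁻¹ := by rw [← mul_assoc F⁻¹ F Pr, hFi, one_mul]
  set u := F⁻¹.mulVec (B.mulVec b) with hu
  obtain ⟨ζ, hζ⟩ := hspan
  obtain ⟨y, hy⟩ := hVinf u
  have hPru : Pr.mulVec u = Vf.mulVec ζ := by
    rw [← hζ, hu]
    simp only [Matrix.mulVec_mulVec]
    rw [← Matrix.mul_assoc, ← Matrix.mul_assoc, hswap]
  have huz : u = V.mulVec (Sum.elim ζ y) := by
    rw [hV, Matrix.fromCols_mulVec_sumElim, ← hPru, ← hy]
    simp [Matrix.sub_mulVec]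
  set Fr := σ • (Wᵀ * E * V) - Wᵀ * A * V with hFr
  have hFrW : Fr = Wᵀ * F * V := by
    simp only [hFr, hF, Matrix.sub_mul, Matrix.mul_sub, Matrix.smul_mul, Matrix.mul_smul]
  have hrdet : IsUnit Fr.det := (Matrix.isUnit_iff_isUnit_det _).mp hred
  have hFri : Fr⁻¹ * Fr = 1 := Matrix.nonsing_inv_mul _ hrdet
  have hz : Fr.mulVec (Sum.elim ζ y) = (Wᵀ * B).mulVec b := by
    rw [hFrW, ← Matrix.mulVec_mulVec, ← Matrix.mulVec_mulVec, ← huz, hu]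
    simp only [Matrix.mulVec_mulVec]
    rw [← Matrix.mul_assoc F F⁻¹ B, hiF, Matrix.one_mul]
  have hz' : Fr⁻¹.mulVec ((Wᵀ * B).mulVec b) = Sum.elim ζ y := by
    rw [← hz, Matrix.mulVec_mulVec, hFri, Matrix.one_mulVec]
  calc (C * F⁻¹ * B + D).mulVec b
      = C.mulVec u + D.mulVec b := by
        rw [Matrix.add_mulVec, hu]
        simp only [Matrix.mulVec_mulVec, Matrix.mul_assoc]
    _ = C.mulVec (V.mulVec (Fr⁻¹.mulVec ((Wᵀ * B).mulVec b))) + D.mulVec b := by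
        rw [hz', ← huz]
    _ = (C * V * Fr⁻¹ * (Wᵀ * B) + D).mulVec b := by
        simp only [Matrix.add_mulVec, Matrix.mulVec_mulVec, Matrix.mul_assoc]
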